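/- For integers 1 ≤ k ≤ n and constant C ≥ 1, the product ∏_{j=n-k+1}^{n} (1 - 1/(j(C+1))) is at most (1 - k/(n+1))^{1/(C+1)}. -/

import Mathlib

open Finset

lemma sum_log_telescope (a b : ℕ)
    (hab : a ≤ b + 1) :
    ∑ j ∈ Finset.Icc a b, (Real.log (j + 1) - Real.log j)
      = Real.log (b + 1) - Real.log a := by
  rw [← Finset.Ico_add_one_right_eq_Icc, Finset.sum_Ico_eq_sum_range]
  have := Finset.sum_range_sub (fun i => Real.log ((a : ℝ) + i)) (b + 1 - a)
  simp only [Nat.cast_zero, add_zero] at this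
  have h2 : ((b + 1 - a : ℕ):ℝ) = (b:ℝ) + 1 - a := by
    rw [Nat.cast_sub hab]; push_cast; ring
  rw [h2] at this
  have h3 : (a:ℝ) + ((b:ℝ) + 1 - (a:ℝ)) = (b:ℝ) + 1 := by ring
  rw [h3] at this
  rw [← this]
  apply Finset.sum_congr rfl
  intro i _
  push_cast
  ring_nf

/-- for integers `1 ≤ k ≤ n` and `C ≥ 1`,
`∏_{j=n-k+1}^{n} (1 - 1/(j(C+1))) ≤ (1 - k/(n+1))^{1/(C+1)}`. -/
theorem prod_contraction_le_rpow (n k : ℕ) (hk1 : 1 ≤ k) (hkn : k ≤ n)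
    (C : ℝ) (hC : 1 ≤ C) :
    ∏ j ∈ Finset.Icc (n - k + 1) n, (1 - 1 / ((j : ℝ) * (C + 1))) ≤
      (1 - (k : ℝ) / ((n : ℝ) + 1)) ^ (1 / (C + 1)) := by
  set a := n - k + 1 with ha
  have haR : (a : ℝ) = (n : ℝ) - k + 1 := by
    rw [ha]; push_cast [Nat.cast_sub hkn]; ring
  have hC1 : (0:ℝ) < C + 1 := by linarith
  have haPos : (0:ℝ) < a := by positivity
  have hn1 : (0:ℝ) < (n:ℝ) + 1 := by positivity
  have hjpos : ∀ j ∈ Finset.Icc a n, (0:ℝ) < j := by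
    intro j hj
    simp only [Finset.mem_Icc] at hj
    have : 1 ≤ j := le_trans (Nat.le_add_left 1 _) hj.1
    exact_mod_cast this
  -- Step 1: each factor is nonneg and ≤ exp(-x)
  have step1 : ∏ j ∈ Finset.Icc a n, (1 - 1 / ((j : ℝ) * (C + 1)))
      ≤ ∏ j ∈ Finset.Icc a n, Real.exp (-(1 / ((j : ℝ) * (C + 1)))) := by
    apply Finset.prod_le_prod
    · intro j hj
      have hjp := hjpos j hj
      have h1 : 1 / ((j : ℝ) * (C + 1)) ≤ 1 := by
        rw [div_le_one (by positivity)]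
        have hj1 : (1:ℝ) ≤ j := by exact_mod_cast Nat.one_le_iff_ne_zero.mpr (by exact_mod_cast hjp.ne')
        nlinarith
      linarith
    · intro j hj
      have := Real.add_one_le_exp (-(1 / ((j : ℝ) * (C + 1))))
      linarith
  rw [← Real.exp_sum] at step1
  -- Step 2+3: sum bound
  have hsum : Real.log ((n:ℝ) + 1) - Real.log a ≤ ∑ j ∈ Finset.Icc a n, 1 / (j:ℝ) := by
    have han : a ≤ n + 1 := by omega
    have htel := sum_log_telescope a n han
    rw [← htel]
    apply Finset.sum_le_sum
    intro j hj
    have hjp := hjpos j hj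
    have hlog : Real.log ((j:ℝ) + 1) - Real.log j = Real.log (((j:ℝ) + 1) / j) :=
      (Real.log_div (by positivity) (ne_of_gt hjp)).symm
    rw [hlog]
    have := Real.log_le_sub_one_of_pos (show (0:ℝ) < ((j:ℝ)+1)/j by positivity)
    have heq : ((j:ℝ) + 1) / j - 1 = 1 / j := by field_simp; ring
    linarith [heq ▸ this]
  have hsum2 : ∑ j ∈ Finset.Icc a n, 1 / ((j : ℝ) * (C + 1))
      = (1 / (C + 1)) * ∑ j ∈ Finset.Icc a n, 1 / (j:ℝ) := by
    rw [Finset.mul_sum]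
    apply Finset.sum_congr rfl
    intro j hj
    have := hjpos j hj
    field_simp
  -- Step 4: rewrite RHS
  have hbase : 1 - (k : ℝ) / ((n : ℝ) + 1) = (a : ℝ) / ((n:ℝ) + 1) := by
    rw [haR]; field_simp; ring
  have hbpos : (0:ℝ) < (a:ℝ) / ((n:ℝ) + 1) := by positivity
  rw [hbase, Real.rpow_def_of_pos hbpos, Real.log_div (ne_of_gt haPos) (ne_of_gt hn1)]
  refine le_trans step1 ?_
  apply Real.exp_le_exp.mpr
  rw [Finset.sum_neg_distrib, hsum2]
  have h1C : 0 < 1 / (C + 1) := by positivity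
  calc -(1 / (C + 1) * ∑ j ∈ Finset.Icc a n, 1 / (j:ℝ))
      ≤ -(1 / (C + 1) * (Real.log ((n:ℝ) + 1) - Real.log a)) := by
        apply neg_le_neg
        exact mul_le_mul_of_nonneg_left hsum (le_of_lt h1C)
    _ = (Real.log a - Real.log ((n:ℝ) + 1)) * (1 / (C + 1)) := by ring
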